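/- arXiv:1505.00770 — 3 statements merged into one kernel-verified Lean document; each statement's English description precedes it below -/
import Mathlib

section
/- Let Δ : M_n(ℂ) → M_n(ℂ) be a weak-2-local derivation and let p_1,...,p_n be mutually orthogonal minimal projections with associated matrix units e_{ij} (satisfying e_{ij}* e_{ij} = p_j, e_{ij} e_{ij}* = p_i). Then there exists w_0 ∈ M_n(ℂ) such that Δ(Σ_k λ_k p_k) = [w_0, Σ_k λ_k p_k] for all λ_1,...,λ_n ∈ ℂ, and Δ(e_{1j}) = [w_0, e_{1j}] for all 2 ≤ j ≤ n. -/
open Matrix Finset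

variable {n : ℕ}

/-- A linear derivation on `Mₙ(ℂ)`. -/
def IsMatrixDerivation (D : Matrix (Fin n) (Fin n) ℂ →ₗ[ℂ] Matrix (Fin n) (Fin n) ℂ) : Prop :=
  ∀ x y, D (x * y) = D x * y + x * D y

/-- A (non-necessarily linear) weak-2-local derivation on `Mₙ(ℂ)`. -/
def IsWeak2LocalDerivation (Δ : Matrix (Fin n) (Fin n) ℂ → Matrix (Fin n) (Fin n) ℂ) : Prop :=
  ∀ a b : Matrix (Fin n) (Fin n) ℂ, ∀ φ : Matrix (Fin n) (Fin n) ℂ →ₗ[ℂ] ℂ,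
    ∃ D : Matrix (Fin n) (Fin n) ℂ →ₗ[ℂ] Matrix (Fin n) (Fin n) ℂ,
      IsMatrixDerivation D ∧ φ (Δ a) = φ (D a) ∧ φ (Δ b) = φ (D b)

/-- A system of matrix units in `Mₙ(ℂ)`: `e i j * e k l = δ_{jk} e i l`, `(e i j)* = e j i`,
and `∑ i, e i i = 1`.  The `p i := e i i` are then mutually orthogonal minimal projections and
`(e i j)* (e i j) = p j`, `(e i j)(e i j)* = p i`. -/
structure IsMatrixUnitSystem (e : Fin n → Fin n → Matrix (Fin n) (Fin n) ℂ) : Prop where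
  mul_eq : ∀ i j k l, e i j * e k l = (if j = k then (1 : ℂ) else 0) • e i l
  star_eq : ∀ i j, star (e i j) = e j i
  sum_diag : ∑ i, e i i = 1

namespace W2L

/-- The coordinate functional `x ↦ tr (e j i * x)`, which extracts the `(i,j)` coefficient
of `x` in the basis of matrix units. -/
noncomputable def phi (e : Fin n → Fin n → Matrix (Fin n) (Fin n) ℂ) (i j : Fin n) :
    Matrix (Fin n) (Fin n) ℂ →ₗ[ℂ] ℂ :=
  (Matrix.traceLinearMap (Fin n) ℂ ℂ).comp (LinearMap.mulLeft ℂ (e j i))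

lemma phi_apply (e : Fin n → Fin n → Matrix (Fin n) (Fin n) ℂ) (i j : Fin n) (x) :
    phi e i j x = (e j i * x).trace := rfl

variable {e : Fin n → Fin n → Matrix (Fin n) (Fin n) ℂ} (he : IsMatrixUnitSystem e)
include he

lemma trace_diag (hn : 0 < n) (i : Fin n) : (e i i).trace = 1 := by
  set o : Fin n := ⟨0, hn⟩
  have hsame : ∀ i j : Fin n, (e i i).trace = (e j j).trace := by
    intro i j
    have h1 : e i i = e i j * e j i := by rw [he.mul_eq]; simp
    have h2 : e j i * e i j = e j j := by rw [he.mul_eq]; simp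
    rw [h1, Matrix.trace_mul_comm, h2]
  have hsum : ∑ k : Fin n, (e k k).trace = (n : ℂ) := by
    rw [← Matrix.trace_sum, he.sum_diag, Matrix.trace_one]
    simp
  have h2 : ∑ k : Fin n, (e k k).trace = (n : ℂ) * (e o o).trace := by
    rw [Finset.sum_congr rfl (fun k _ => hsame k o), Finset.sum_const,
      Finset.card_univ, Fintype.card_fin, nsmul_eq_mul]
  have h1 : (n : ℂ) * (e o o).trace = (n : ℂ) := by rw [← h2, hsum]
  have hn' : (n : ℂ) ≠ 0 := Nat.cast_ne_zero.mpr hn.ne'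
  have := mul_left_cancel₀ hn' (h1.trans (mul_one (n:ℂ)).symm)
  rw [hsame i o, this]

lemma trace_e (hn : 0 < n) (i j : Fin n) :
    (e i j).trace = if i = j then (1:ℂ) else 0 := by
  have h1 : e i j = e i i * e i j := by rw [he.mul_eq]; simp
  rw [h1, Matrix.trace_mul_comm, he.mul_eq]
  rcases eq_or_ne j i with h | h
  · subst h; simp [trace_diag he hn]
  · simp [h, Ne.symm h]

lemma phi_e (hn : 0 < n) (i j a b : Fin n) :
    phi e i j (e a b) = if i = a then (if j = b then (1:ℂ) else 0) else 0 := by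
  rw [phi_apply, he.mul_eq]
  rcases eq_or_ne i a with h | h
  · subst h; simp [trace_e he hn]
  · simp [h, Ne.symm h]

lemma phi_mul_e (i j a b : Fin n) (w : Matrix (Fin n) (Fin n) ℂ) :
    phi e i j (w * e a b) = if j = b then phi e i a w else 0 := by
  rw [phi_apply, phi_apply, ← mul_assoc, Matrix.trace_mul_comm, ← mul_assoc, he.mul_eq]
  rcases eq_or_ne j b with h | h
  · subst h; simp
  · simp [h, Ne.symm h]

lemma phi_e_mul (i j a b : Fin n) (w : Matrix (Fin n) (Fin n) ℂ) :
    phi e i j (e a b * w) = if i = a then phi e b j w else 0 := by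
  rw [phi_apply, phi_apply, ← mul_assoc, he.mul_eq]
  rcases eq_or_ne i a with h | h
  · subst h; simp
  · simp [h, Ne.symm h]

lemma phi_ext (hn : 0 < n) {x : Matrix (Fin n) (Fin n) ℂ}
    (hx : ∀ i j, phi e i j x = 0) : x = 0 := by
  have li : LinearIndependent ℂ (fun p : Fin n × Fin n => e p.1 p.2) := by
    rw [Fintype.linearIndependent_iff]
    intro g hg p
    have h := congrArg (phi e p.1 p.2) hg
    rw [map_sum, map_zero] at h
    simp only [_root_.map_smul] at h
    rw [Finset.sum_eq_single p] at h
    · simpa [phi_e he hn] using h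
    · intro q _ hq
      rw [phi_e he hn]
      by_cases h1 : p.1 = q.1
      · have h2 : p.2 ≠ q.2 := fun h2 => hq ((Prod.ext h1 h2).symm : q = p)
        simp [h1, h2]
      · simp [h1]
    · intro h; exact absurd (Finset.mem_univ p) h
  have hcard : Fintype.card (Fin n × Fin n) = Module.finrank ℂ (Matrix (Fin n) (Fin n) ℂ) := by
    simp [Module.finrank_matrix]
  have : Nonempty (Fin n × Fin n) := ⟨(⟨0, hn⟩, ⟨0, hn⟩)⟩
  have hspan := li.span_eq_top_of_card_eq_finrank hcard
  have hx' : x ∈ Submodule.span ℂ (Set.range fun p : Fin n × Fin n => e p.1 p.2) := by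
    rw [hspan]; trivial
  obtain ⟨c, hc⟩ := (Submodule.mem_span_range_iff_exists_fun ℂ).mp hx'
  have hc0 : ∀ p : Fin n × Fin n, c p = 0 := by
    intro p
    have h := congrArg (phi e p.1 p.2) hc
    rw [map_sum] at h
    simp only [_root_.map_smul] at h
    rw [Finset.sum_eq_single p] at h
    · rw [hx p.1 p.2] at h
      simpa [phi_e he hn] using h
    · intro q _ hq
      rw [phi_e he hn]
      by_cases h1 : p.1 = q.1
      · have h2 : p.2 ≠ q.2 := fun h2 => hq ((Prod.ext h1 h2).symm : q = p)
        simp [h1, h2]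
      · simp [h1]
    · intro h; exact absurd (Finset.mem_univ p) h
  rw [← hc]
  simp [hc0]

/-- Every (linear) derivation of `Mₙ(ℂ)` acts on the matrix units as a commutator with a
fixed element. -/
lemma exists_inner (hn : 0 < n) (D : Matrix (Fin n) (Fin n) ℂ →ₗ[ℂ] Matrix (Fin n) (Fin n) ℂ)
    (hD : IsMatrixDerivation D) :
    ∃ w, ∀ a b, D (e a b) = w * e a b - e a b * w := by
  have o : Fin n := ⟨0, hn⟩
  have hqq : e o o * e o o = e o o := by rw [he.mul_eq]; simp
  have hd : D (e o o) = D (e o o) * e o o + e o o * D (e o o) := by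
    conv_lhs => rw [← hqq]
    exact hD (e o o) (e o o)
  have A0 : e o o * D (e o o) * e o o = 0 := by
    have c1 : e o o * (D (e o o) * e o o + e o o * D (e o o)) * e o o
        = e o o * D (e o o) * (e o o * e o o) + (e o o * e o o) * (D (e o o) * e o o) := by
      noncomm_ring
    have h3 : e o o * D (e o o) * e o o
        = e o o * D (e o o) * e o o + e o o * D (e o o) * e o o := by
      conv_lhs => rw [hd]
      rw [c1, hqq, ← mul_assoc]
    exact add_eq_right.mp h3.symm
  have step1 : ∀ b i, e o b * D (e i o)
      = (if b = i then (1:ℂ) else 0) • D (e o o) - D (e o b) * e i o := by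
    intro b i
    have h := hD (e o b) (e i o)
    rw [he.mul_eq o b i o, _root_.map_smul] at h
    exact eq_sub_of_add_eq' h.symm
  refine ⟨∑ i, D (e i o) * e o i, fun a b => ?_⟩
  have hab : e a b = e a o * e o b := by rw [he.mul_eq]; simp
  have h1 : (∑ i, D (e i o) * e o i) * e a b = D (e a o) * e o b := by
    rw [Finset.sum_mul, Finset.sum_eq_single a]
    · rw [mul_assoc, he.mul_eq]; simp
    · intro i _ hia; rw [mul_assoc, he.mul_eq]; simp [hia]
    · simp
  have haq : e a o * e o o = e a o := by rw [he.mul_eq]; simp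
  have hqb : e o o * e o b = e o b := by rw [he.mul_eq]; simp
  have hz : e a o * D (e o o) * e o b = 0 := by
    calc e a o * D (e o o) * e o b = (e a o * e o o) * D (e o o) * (e o o * e o b) := by
          rw [haq, hqb]
      _ = e a o * (e o o * D (e o o) * e o o) * e o b := by noncomm_ring
      _ = 0 := by rw [A0, mul_zero, zero_mul]
  have h2 : e a b * (∑ i, D (e i o) * e o i) = - (e a o * D (e o b)) := by
    rw [Finset.mul_sum]
    have term : ∀ i, e a b * (D (e i o) * e o i)
        = (if b = i then (1:ℂ) else 0) • (e a o * D (e o o) * e o i)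
          - e a o * D (e o b) * (e i o * e o i) := by
      intro i
      calc e a b * (D (e i o) * e o i)
          = e a o * (e o b * D (e i o)) * e o i := by rw [hab]; noncomm_ring
        _ = e a o * ((if b = i then (1:ℂ) else 0) • D (e o o) - D (e o b) * e i o) * e o i := by
            rw [step1]
        _ = _ := by
            rw [mul_sub, sub_mul, mul_smul_comm, smul_mul_assoc]
            noncomm_ring
    rw [Finset.sum_congr rfl (fun i _ => term i), Finset.sum_sub_distrib]
    have s1 : ∑ i, (if b = i then (1:ℂ) else 0) • (e a o * D (e o o) * e o i) = 0 := by
      simp only [ite_smul, one_smul, zero_smul]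
      rw [Finset.sum_ite_eq]
      simp [hz]
    have s2 : ∑ i, e a o * D (e o b) * (e i o * e o i) = e a o * D (e o b) := by
      rw [← Finset.mul_sum]
      have hii : ∀ i : Fin n, e i o * e o i = e i i := fun i => by rw [he.mul_eq]; simp
      rw [Finset.sum_congr rfl (fun i _ => hii i), he.sum_diag, mul_one]
    rw [s1, s2, zero_sub]
  have h3 : D (e a b) = D (e a o) * e o b + e a o * D (e o b) := by
    conv_lhs => rw [hab]
    exact hD (e a o) (e o b)
  rw [h3, h1, h2, sub_neg_eq_add]

omit he in
lemma inner_diag {D : Matrix (Fin n) (Fin n) ℂ →ₗ[ℂ] Matrix (Fin n) (Fin n) ℂ}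
    {w : Matrix (Fin n) (Fin n) ℂ}
    (hw : ∀ a b, D (e a b) = w * e a b - e a b * w) (lam : Fin n → ℂ) :
    D (∑ k, lam k • e k k) = w * (∑ k, lam k • e k k) - (∑ k, lam k • e k k) * w := by
  rw [map_sum, Finset.mul_sum, Finset.sum_mul, ← Finset.sum_sub_distrib]
  refine Finset.sum_congr rfl fun k _ => ?_
  rw [_root_.map_smul, hw, smul_sub, mul_smul_comm, smul_mul_assoc]

lemma phi_mul_diag (i j : Fin n) (lam : Fin n → ℂ) (w : Matrix (Fin n) (Fin n) ℂ) :
    phi e i j (w * ∑ k, lam k • e k k) = lam j * phi e i j w := by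
  rw [Finset.mul_sum, map_sum]
  have hterm : ∀ k, phi e i j (w * (lam k • e k k))
      = if j = k then lam k * phi e i j w else 0 := by
    intro k
    rw [mul_smul_comm, _root_.map_smul, phi_mul_e he]
    rcases eq_or_ne j k with h | h
    · subst h; simp [smul_eq_mul]
    · simp [h]
  rw [Finset.sum_congr rfl fun k _ => hterm k, Finset.sum_ite_eq]
  simp

lemma phi_diag_mul (i j : Fin n) (lam : Fin n → ℂ) (w : Matrix (Fin n) (Fin n) ℂ) :
    phi e i j ((∑ k, lam k • e k k) * w) = lam i * phi e i j w := by
  rw [Finset.sum_mul, map_sum]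
  have hterm : ∀ k, phi e i j ((lam k • e k k) * w)
      = if i = k then lam k * phi e i j w else 0 := by
    intro k
    rw [smul_mul_assoc, _root_.map_smul, phi_e_mul he]
    rcases eq_or_ne i k with h | h
    · subst h; simp [smul_eq_mul]
    · simp [h]
  rw [Finset.sum_congr rfl fun k _ => hterm k, Finset.sum_ite_eq]
  simp

lemma phi_comm_diag (i j : Fin n) (lam : Fin n → ℂ) (w : Matrix (Fin n) (Fin n) ℂ) :
    phi e i j (w * (∑ k, lam k • e k k) - (∑ k, lam k • e k k) * w)
      = (lam j - lam i) * phi e i j w := by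
  rw [map_sub, phi_mul_diag he, phi_diag_mul he]
  ring

lemma phi_comm_unit (i j a b : Fin n) (w : Matrix (Fin n) (Fin n) ℂ) :
    phi e i j (w * e a b - e a b * w)
      = (if j = b then phi e i a w else 0) - (if i = a then phi e b j w else 0) := by
  rw [map_sub, phi_mul_e he, phi_e_mul he]

end W2L

/-- Given a weak-2-local derivation `Δ` on `Mₙ(ℂ)` and mutually orthogonal minimal projections
`p_k = e k k` with associated matrix units `e i j`, there is `w₀ ∈ Mₙ(ℂ)` with
`Δ(∑ λ_k p_k) = [w₀, ∑ λ_k p_k]` for all scalars `λ`, and `Δ(e_{1j}) = [w₀, e_{1j}]` for `j ≠ 1`. -/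
theorem exists_w0_weak2local (hn : 0 < n)
    (Δ : Matrix (Fin n) (Fin n) ℂ → Matrix (Fin n) (Fin n) ℂ)
    (hΔ : IsWeak2LocalDerivation Δ)
    (e : Fin n → Fin n → Matrix (Fin n) (Fin n) ℂ) (he : IsMatrixUnitSystem e) :
    ∃ w₀ : Matrix (Fin n) (Fin n) ℂ,
      (∀ lam : Fin n → ℂ,
        Δ (∑ k, lam k • e k k) =
          w₀ * (∑ k, lam k • e k k) - (∑ k, lam k • e k k) * w₀) ∧
      ∀ j : Fin n, j ≠ ⟨0, hn⟩ →
        Δ (e ⟨0, hn⟩ j) = w₀ * e ⟨0, hn⟩ j - e ⟨0, hn⟩ j * w₀ := by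
  classical
  set o : Fin n := ⟨0, hn⟩ with ho
  have hcne : ∀ {i j : Fin n}, i ≠ j → ((j.val : ℂ) - (i.val : ℂ)) ≠ 0 := by
    intro i j hij
    refine sub_ne_zero.mpr fun h => hij ?_
    exact (Fin.val_injective (Nat.cast_injective h)).symm
  set v : Fin n → Fin n → ℂ := fun i j =>
    W2L.phi e i j (Δ (∑ k : Fin n, (k.val : ℂ) • e k k)) / ((j.val : ℂ) - (i.val : ℂ)) with hv
  -- the diagonal coefficients of `Δ` on diagonal combinations vanish
  have claimB : ∀ (lam : Fin n → ℂ) i, W2L.phi e i i (Δ (∑ k, lam k • e k k)) = 0 := by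
    intro lam i
    obtain ⟨D, hD, h1, -⟩ := hΔ (∑ k, lam k • e k k) (∑ k, lam k • e k k) (W2L.phi e i i)
    obtain ⟨w, hw⟩ := W2L.exists_inner he hn D hD
    rw [h1, W2L.inner_diag hw, W2L.phi_comm_diag he]
    ring
  -- the off-diagonal coefficients of `Δ` on diagonal combinations
  have claimA : ∀ (lam : Fin n → ℂ) i j, i ≠ j →
      W2L.phi e i j (Δ (∑ k, lam k • e k k)) = (lam j - lam i) * v i j := by
    intro lam i j hij
    obtain ⟨D, hD, h1, h2⟩ := hΔ (∑ k, lam k • e k k) (∑ k : Fin n, (k.val : ℂ) • e k k)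
      (W2L.phi e i j)
    obtain ⟨w, hw⟩ := W2L.exists_inner he hn D hD
    rw [W2L.inner_diag hw, W2L.phi_comm_diag he] at h1 h2
    rw [h1]
    simp only [hv]
    rw [h2, mul_div_cancel_left₀ _ (hcne hij)]
  have claim3a : ∀ j₀, j₀ ≠ o → ∀ i j, i ≠ o → j ≠ j₀ →
      W2L.phi e i j (Δ (e o j₀)) = 0 := by
    intro j₀ hj₀ i j hi hj
    obtain ⟨D, hD, h1, -⟩ := hΔ (e o j₀) (e o j₀) (W2L.phi e i j)
    obtain ⟨w, hw⟩ := W2L.exists_inner he hn D hD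
    rw [h1, hw, W2L.phi_comm_unit he]
    simp [hi, hj]
  have claim3b : ∀ j₀, j₀ ≠ o → ∀ i, i ≠ o →
      W2L.phi e i j₀ (Δ (e o j₀)) = v i o := by
    intro j₀ hj₀ i hi
    have ho' : o ≠ j₀ := fun h => hj₀ h.symm
    set μ : Fin n → ℂ := fun k => if k = o then 1 else 0 with hμ
    obtain ⟨D, hD, h1, h2⟩ := hΔ (e o j₀) (∑ k, μ k • e k k)
      (W2L.phi e i j₀ + W2L.phi e i o)
    obtain ⟨w, hw⟩ := W2L.exists_inner he hn D hD
    have e1 : (W2L.phi e i j₀ + W2L.phi e i o) (D (e o j₀)) = W2L.phi e i o w := by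
      rw [LinearMap.add_apply, hw, W2L.phi_comm_unit he, W2L.phi_comm_unit he]
      simp [hi, ho']
    have e2 : (W2L.phi e i j₀ + W2L.phi e i o) (D (∑ k, μ k • e k k))
        = W2L.phi e i o w := by
      rw [LinearMap.add_apply, W2L.inner_diag hw, W2L.phi_comm_diag he, W2L.phi_comm_diag he]
      simp [hμ, hi, hj₀]
    have key : (W2L.phi e i j₀ + W2L.phi e i o) (Δ (e o j₀))
        = (W2L.phi e i j₀ + W2L.phi e i o) (Δ (∑ k, μ k • e k k)) :=
      ((h1.trans e1).trans e2.symm).trans h2.symm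
    have hA1 : W2L.phi e i j₀ (Δ (∑ k, μ k • e k k)) = 0 := by
      rcases eq_or_ne i j₀ with h | h
      · rw [h]; exact claimB μ j₀
      · rw [claimA μ i j₀ h]
        simp [hμ, hi, hj₀]
    have hA2 : W2L.phi e i o (Δ (∑ k, μ k • e k k)) = v i o := by
      rw [claimA μ i o hi]
      simp [hμ, hi]
    have h3a := claim3a j₀ hj₀ i o hi ho'
    rw [LinearMap.add_apply, LinearMap.add_apply, h3a, hA1, hA2] at key
    simpa using key
  have claim3c : ∀ j₀, j₀ ≠ o → ∀ j, j ≠ j₀ →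
      W2L.phi e o j (Δ (e o j₀)) = - v j₀ j := by
    intro j₀ hj₀ j hj
    have ho' : o ≠ j₀ := fun h => hj₀ h.symm
    set μ : Fin n → ℂ := fun k => if k = j₀ then 1 else 0 with hμ
    obtain ⟨D, hD, h1, h2⟩ := hΔ (e o j₀) (∑ k, μ k • e k k)
      (W2L.phi e o j + W2L.phi e j₀ j)
    obtain ⟨w, hw⟩ := W2L.exists_inner he hn D hD
    have e1 : (W2L.phi e o j + W2L.phi e j₀ j) (D (e o j₀)) = - W2L.phi e j₀ j w := by
      rw [LinearMap.add_apply, hw, W2L.phi_comm_unit he, W2L.phi_comm_unit he]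
      simp [hj, hj₀]
    have e2 : (W2L.phi e o j + W2L.phi e j₀ j) (D (∑ k, μ k • e k k))
        = - W2L.phi e j₀ j w := by
      rw [LinearMap.add_apply, W2L.inner_diag hw, W2L.phi_comm_diag he, W2L.phi_comm_diag he]
      simp [hμ, hj, ho']
    have key : (W2L.phi e o j + W2L.phi e j₀ j) (Δ (e o j₀))
        = (W2L.phi e o j + W2L.phi e j₀ j) (Δ (∑ k, μ k • e k k)) :=
      ((h1.trans e1).trans e2.symm).trans h2.symm
    have hA1 : W2L.phi e o j (Δ (∑ k, μ k • e k k)) = 0 := by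
      rcases eq_or_ne o j with h | h
      · rw [← h]; exact claimB μ o
      · rw [claimA μ o j h]
        simp [hμ, hj, ho']
    have hA2 : W2L.phi e j₀ j (Δ (∑ k, μ k • e k k)) = - v j₀ j := by
      rw [claimA μ j₀ j (fun hh => hj hh.symm)]
      simp [hμ, hj]
    have h3a := claim3a j₀ hj₀ j₀ j hj₀ hj
    rw [LinearMap.add_apply, LinearMap.add_apply, h3a, hA1, hA2] at key
    simpa using key
  -- the element w₀
  set coeff : Fin n → Fin n → ℂ := fun i j =>
    if i = j then (if i = o then 0 else - W2L.phi e o i (Δ (e o i))) else v i j with hcoeff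
  set w₀ : Matrix (Fin n) (Fin n) ℂ :=
    ∑ p : Fin n × Fin n, coeff p.1 p.2 • e p.1 p.2 with hw₀
  have hφw₀ : ∀ a b, W2L.phi e a b w₀ = coeff a b := by
    intro a b
    rw [hw₀, map_sum]
    simp only [_root_.map_smul]
    rw [Finset.sum_eq_single (a, b)]
    · rw [W2L.phi_e he hn]; simp
    · intro q _ hq
      rw [W2L.phi_e he hn]
      by_cases h1 : a = q.1
      · have h2 : b ≠ q.2 := fun h2 => hq ((Prod.ext h1 h2).symm : q = (a, b))
        simp [h1, h2]
      · simp [h1]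
    · simp
  refine ⟨w₀, ?_, ?_⟩
  · intro lam
    have key : Δ (∑ k, lam k • e k k)
        - (w₀ * (∑ k, lam k • e k k) - (∑ k, lam k • e k k) * w₀) = 0 := by
      apply W2L.phi_ext he hn
      intro i j
      rw [map_sub, W2L.phi_comm_diag he, hφw₀]
      rcases eq_or_ne i j with h | h
      · subst h
        rw [claimB]
        ring
      · rw [claimA lam i j h]
        simp only [hcoeff, if_neg h]
        ring
    exact sub_eq_zero.mp key
  · intro j₀ hj₀
    apply sub_eq_zero.mp
    apply W2L.phi_ext he hn
    intro i j
    rw [map_sub, W2L.phi_comm_unit he, hφw₀, hφw₀]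
    by_cases hio : i = o
    · by_cases hjj : j = j₀
      · rw [hio, hjj]
        simp only [hcoeff, if_pos rfl, if_neg hj₀]
        simp
      · rw [hio, claim3c j₀ hj₀ j hjj]
        have hne : j₀ ≠ j := fun h => hjj h.symm
        simp [hcoeff, hjj, hne]
    · by_cases hjj : j = j₀
      · rw [hjj, claim3b j₀ hj₀ i hio]
        simp only [hcoeff, if_pos rfl, if_neg hio]
        simp [hio]
      · rw [claim3a j₀ hj₀ i j hio hjj]
        simp [hjj, hio]
end

section
/- Every (not necessarily linear) symmetric weak-2-local derivation Δ on M_n(ℂ) (i.e., satisfying Δ(a*)* = Δ(a) for all a) is a linear *-derivation. -/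
open Matrix

variable {n : ℕ}

namespace Weak2LocalAux

open Finset

abbrev Mat (n : ℕ) := Matrix (Fin n) (Fin n) ℂ

def e {n : ℕ} (i j : Fin n) : Mat n := Matrix.single i j (1 : ℂ)

lemma e_mul_same {n} (i j k : Fin n) : e i j * e j k = e i k := by simp [e]

lemma e_mul_ne {n} {j k : Fin n} (h : j ≠ k) (i l : Fin n) : e i j * e k l = 0 := by
  unfold e; exact Matrix.single_mul_single_of_ne _ _ _ _ h _

lemma trace_mul_e {n} (X : Mat n) (i j : Fin n) : trace (X * e i j) = X j i := by
  simp only [Matrix.trace, Matrix.diag, Matrix.mul_apply, e, Matrix.single, Matrix.of_apply,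
    mul_ite, mul_one, mul_zero]
  rw [Finset.sum_comm]
  simp [Finset.sum_ite_eq, ite_and]

lemma eq_of_forall_trace {n} {X Y : Mat n} (h : ∀ c, trace (X * c) = trace (Y * c)) : X = Y := by
  ext i j
  have := h (e j i)
  rwa [trace_mul_e, trace_mul_e] at this

lemma sum_diag_e {n} : ∑ i : Fin n, e i i = (1 : Mat n) := by
  ext p q
  simp only [Matrix.sum_apply, e, Matrix.single, Matrix.of_apply, Matrix.one_apply, ite_and]
  by_cases h : p = q <;> simp [h, Finset.sum_ite_eq]

lemma derivation_inner {N} (D : Mat (N+1) →ₗ[ℂ] Mat (N+1)) (hD : IsMatrixDerivation D) :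
    ∃ w, ∀ x, D x = w * x - x * w := by
  set E : Fin (N+1) → Fin (N+1) → Mat (N+1) := fun i j => e i j with hE
  have h00 : E 0 0 * D (E 0 0) * E 0 0 = 0 := by
    have h := hD (E 0 0) (E 0 0)
    rw [e_mul_same] at h
    have h2 : E 0 0 * D (E 0 0) * E 0 0
        = E 0 0 * D (E 0 0) * E 0 0 + E 0 0 * D (E 0 0) * E 0 0 := by
      calc E 0 0 * D (E 0 0) * E 0 0
          = E 0 0 * (D (E 0 0) * E 0 0 + E 0 0 * D (E 0 0)) * E 0 0 := by rw [← h]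
        _ = E 0 0 * D (E 0 0) * (E 0 0 * E 0 0) + (E 0 0 * E 0 0) * D (E 0 0) * E 0 0 := by
            noncomm_ring
        _ = E 0 0 * D (E 0 0) * E 0 0 + E 0 0 * D (E 0 0) * E 0 0 := by rw [e_mul_same]
    exact (add_eq_left.mp h2.symm)
  refine ⟨∑ i, D (E i 0) * E 0 i, ?_⟩
  have key : ∀ j k, D (E j k) = (∑ i, D (E i 0) * E 0 i) * E j k - E j k * (∑ i, D (E i 0) * E 0 i) := by
    intro j k
    have hw1 : (∑ i, D (E i 0) * E 0 i) * E j k = D (E j 0) * E 0 k := by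
      rw [Finset.sum_mul]
      rw [Finset.sum_eq_single j]
      · rw [mul_assoc, e_mul_same]
      · intro i _ hij
        rw [mul_assoc, e_mul_ne hij, mul_zero]
      · simp
    have hrel : ∀ i, E 0 k * D (E i 0) = (if k = i then D (E 0 0) else 0) - D (E 0 k) * E i 0 := by
      intro i
      have h := hD (E 0 k) (E i 0)
      by_cases hki : k = i
      · subst hki
        rw [e_mul_same] at h
        rw [if_pos rfl]
        rw [h]; abel
      · rw [e_mul_ne hki, map_zero] at h
        rw [if_neg hki, zero_sub]
        exact eq_neg_of_add_eq_zero_right h.symm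
    have hw2 : E j k * (∑ i, D (E i 0) * E 0 i)
        = E j 0 * D (E 0 0) * E 0 k - E j 0 * D (E 0 k) := by
      rw [Finset.mul_sum]
      have : ∀ i, E j k * (D (E i 0) * E 0 i)
          = E j 0 * ((if k = i then D (E 0 0) else 0) * E 0 i) - E j 0 * (D (E 0 k) * (E i 0 * E 0 i)) := by
        intro i
        calc E j k * (D (E i 0) * E 0 i)
            = (E j 0 * E 0 k) * (D (E i 0) * E 0 i) := by rw [e_mul_same]
          _ = E j 0 * ((E 0 k * D (E i 0)) * E 0 i) := by noncomm_ring
          _ = E j 0 * (((if k = i then D (E 0 0) else 0) - D (E 0 k) * E i 0) * E 0 i) := by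
              rw [hrel i]
          _ = E j 0 * ((if k = i then D (E 0 0) else 0) * E 0 i) - E j 0 * (D (E 0 k) * (E i 0 * E 0 i)) := by
              noncomm_ring
      rw [Finset.sum_congr rfl (fun i _ => this i), Finset.sum_sub_distrib]
      congr 1
      · rw [Finset.sum_eq_single k]
        · rw [if_pos rfl, mul_assoc]
        · intro i _ hik
          rw [if_neg (Ne.symm hik), zero_mul, mul_zero]
        · simp
      · rw [← Finset.mul_sum, ← Finset.mul_sum]
        have : (∑ i, E i 0 * E 0 i) = (1 : Mat (N+1)) := by
          calc (∑ i : Fin (N+1), E i 0 * E 0 i) = ∑ i : Fin (N+1), e i i := by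
                apply Finset.sum_congr rfl; intro i _; rw [hE]; rw [e_mul_same]
            _ = 1 := sum_diag_e
        rw [this, mul_one]
    rw [hw1, hw2]
    have hjk : D (E j k) = D (E j 0) * E 0 k + E j 0 * D (E 0 k) := by
      have := hD (E j 0) (E 0 k)
      rw [e_mul_same] at this; exact this
    have hcorner : E j 0 * D (E 0 0) * E 0 k = 0 := by
      calc E j 0 * D (E 0 0) * E 0 k = (E j 0 * E 0 0) * D (E 0 0) * (E 0 0 * E 0 k) := by
            rw [e_mul_same, e_mul_same]
        _ = E j 0 * (E 0 0 * D (E 0 0) * E 0 0) * E 0 k := by noncomm_ring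
        _ = 0 := by rw [h00]; noncomm_ring
    rw [hjk, hcorner]
    abel
  intro x
  induction x using Matrix.induction_on' with
  | h_zero => simp
  | h_add p q hp hq => rw [map_add, hp, hq]; noncomm_ring
  | h_std_basis i j c =>
      have hsb : Matrix.single i j c = c • E i j := by
        rw [hE]; unfold e
        rw [smul_single, smul_eq_mul, mul_one]
      rw [hsb, D.map_smul, key i j]
      rw [smul_sub, mul_smul_comm, smul_mul_assoc]

lemma derivation_trace_comm {n} (D : Mat n →ₗ[ℂ] Mat n) (hD : IsMatrixDerivation D)
    (x c : Mat n) (h : x * c = c * x) : trace (D x * c) = 0 := by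
  obtain _ | N := n
  · simp [Matrix.trace]
  · obtain ⟨w, hw⟩ := derivation_inner D hD
    rw [hw]
    rw [sub_mul, trace_sub, mul_assoc, mul_assoc, trace_mul_comm x (w * c), mul_assoc,
      ← h, sub_self]

/-- the trace-against-`c` functional as a linear map -/
noncomputable def trφ {n : ℕ} (c : Mat n) : Mat n →ₗ[ℂ] ℂ :=
  (Matrix.traceLinearMap (Fin n) ℂ ℂ).comp (LinearMap.mulRight ℂ c)

@[simp] lemma trφ_apply {n} (c x : Mat n) : trφ c x = trace (x * c) := rfl

section
variable {n : ℕ} {Δ : Mat n → Mat n} (hΔ : IsWeak2LocalDerivation Δ)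
include hΔ

lemma hwk : ∀ a b c : Mat n, ∃ D, IsMatrixDerivation D ∧
    trace (Δ a * c) = trace (D a * c) ∧ trace (Δ b * c) = trace (D b * c) := by
  intro a b c
  obtain ⟨D, hD, h1, h2⟩ := hΔ a b (trφ c)
  exact ⟨D, hD, h1, h2⟩

lemma hhom : ∀ (r : ℂ) (a : Mat n), Δ (r • a) = r • Δ a := by
  intro r a
  apply eq_of_forall_trace
  intro c
  obtain ⟨D, hD, h1, h2⟩ := hwk hΔ (r • a) a c
  calc trace (Δ (r • a) * c) = trace (D (r • a) * c) := h1
    _ = r • trace (D a * c) := by rw [D.map_smul, smul_mul_assoc, trace_smul]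
    _ = r • trace (Δ a * c) := by rw [h2]
    _ = trace ((r • Δ a) * c) := by rw [smul_mul_assoc, trace_smul]

lemma hkey : ∀ a b c : Mat n, (a - b) * c = c * (a - b) →
    trace (Δ a * c) = trace (Δ b * c) := by
  intro a b c h
  obtain ⟨D, hD, h1, h2⟩ := hwk hΔ a b c
  rw [h1, h2]
  have : trace (D a * c) - trace (D b * c) = 0 := by
    rw [← trace_sub, ← sub_mul, ← map_sub]
    exact derivation_trace_comm D hD _ _ h
  exact sub_eq_zero.mp this

lemma hzero : ∀ a c : Mat n, a * c = c * a → trace (Δ a * c) = 0 := by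
  intro a c h
  have h0 : Δ 0 = 0 := by
    have := hhom hΔ 0 0
    rwa [zero_smul, zero_smul] at this
  have := hkey hΔ a 0 c (by rw [sub_zero]; exact h)
  rw [this, h0, zero_mul, trace_zero]

lemma hskew : ∀ x y : Mat n, trace (Δ x * y) + trace (Δ y * x) = 0 := by
  intro x y
  have t1 : trace (Δ (x + y) * (x + y)) = 0 := hzero hΔ _ _ rfl
  have t2 : trace (Δ (x + y) * x) = trace (Δ y * x) := by
    apply hkey hΔ
    simp [add_sub_cancel_right]
  have t3 : trace (Δ (x + y) * y) = trace (Δ x * y) := by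
    apply hkey hΔ
    simp [add_sub_cancel_left]
  rw [mul_add, trace_add, t2, t3] at t1
  linear_combination t1

lemma hadd : ∀ x y : Mat n, Δ (x + y) = Δ x + Δ y := by
  intro x y
  apply eq_of_forall_trace
  intro c
  have h1 := hskew hΔ (x + y) c
  have h2 := hskew hΔ x c
  have h3 := hskew hΔ y c
  rw [mul_add, trace_add] at h1
  have : trace ((Δ x + Δ y) * c) = trace (Δ x * c) + trace (Δ y * c) := by
    rw [add_mul, trace_add]
  rw [this]
  linear_combination h1 - h2 - h3

end

lemma exists_rep {N : ℕ} (Δ : Mat (N+1) → Mat (N+1))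
    (hadd : ∀ x y, Δ (x + y) = Δ x + Δ y)
    (hhom : ∀ (r : ℂ) x, Δ (r • x) = r • Δ x)
    (hzero : ∀ a c, a * c = c * a → trace (Δ a * c) = 0)
    (hskew : ∀ x y, trace (Δ x * y) + trace (Δ y * x) = 0) :
    ∃ w, ∀ x, Δ x = w * x - x * w := by
  -- zero entries
  have Z : ∀ {i j p q : Fin (N+1)}, p ≠ i → q ≠ j → Δ (e i j) p q = 0 := by
    intro i j p q hp hq
    have hc : e i j * e q p = e q p * e i j := by
      rw [e_mul_ne (Ne.symm hq), e_mul_ne hp]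
    have h0 := hzero _ _ hc
    rwa [trace_mul_e] at h0
  have Z2 : ∀ i j : Fin (N+1), Δ (e i j) j i = 0 := by
    intro i j
    have h0 := hzero (e i j) (e i j) rfl
    rwa [trace_mul_e] at h0
  have S1 : ∀ i j q : Fin (N+1), Δ (e i j) i q + Δ (e q i) j i = 0 := by
    intro i j q
    have h0 := hskew (e i j) (e q i)
    rwa [trace_mul_e, trace_mul_e] at h0
  have D1 : ∀ i q : Fin (N+1), q ≠ i → Δ (e i i) i q = - Δ (e q q) i q := by
    intro i q hqi
    have hc : (e i i + e q q) * e q i = e q i * (e i i + e q q) := by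
      rw [add_mul, mul_add, e_mul_ne (Ne.symm hqi), e_mul_same, e_mul_same,
        e_mul_ne (Ne.symm hqi), zero_add, add_zero]
    have h0 := hzero _ _ hc
    rw [hadd, add_mul, trace_add, trace_mul_e, trace_mul_e] at h0
    linear_combination h0
  have O1 : ∀ i j p : Fin (N+1), i ≠ j → p ≠ i → p ≠ j →
      Δ (e i j) p j = Δ (e i i) p i := by
    intro i j p hij hpi hpj
    have hc : (e i i + e i j) * (e j p - e i p) = (e j p - e i p) * (e i i + e i j) := by
      rw [add_mul, mul_sub, mul_sub, sub_mul, mul_add, mul_add,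
        e_mul_ne hij, e_mul_ne (Ne.symm hij), e_mul_same, e_mul_same,
        e_mul_ne hpi, e_mul_ne hpi, e_mul_ne hpi, e_mul_ne hpi]
      simp
    have h0 := hzero _ _ hc
    rw [hadd, add_mul, mul_sub, mul_sub] at h0
    simp only [trace_add, trace_sub, trace_mul_e] at h0
    have z1 : Δ (e i i) p j = 0 := Z hpi (Ne.symm hij)
    have z2 : Δ (e i j) p i = 0 := Z hpi hij
    linear_combination h0 - z1 + z2
  have O2 : ∀ i j : Fin (N+1), i ≠ j → Δ (e i j) j j = Δ (e i i) j i := by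
    intro i j hij
    have hc : (e i i + e i j) * (e j j - e i j) = (e j j - e i j) * (e i i + e i j) := by
      rw [add_mul, mul_sub, mul_sub, sub_mul, mul_add, mul_add,
        e_mul_ne hij, e_mul_ne (Ne.symm hij), e_mul_same, e_mul_same,
        e_mul_ne (Ne.symm hij), e_mul_ne (Ne.symm hij), e_mul_ne (Ne.symm hij)]
      simp
    have h0 := hzero _ _ hc
    rw [hadd, add_mul, mul_sub, mul_sub] at h0
    simp only [trace_add, trace_sub, trace_mul_e] at h0
    have z1 : Δ (e i i) j j = 0 := Z (Ne.symm hij) (Ne.symm hij)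
    have z2 : Δ (e i j) j i = 0 := Z2 i j
    linear_combination h0 - z1 + z2
  have O3 : ∀ i j : Fin (N+1), i ≠ j → Δ (e i j) i i + Δ (e i j) j j = 0 := by
    intro i j hij
    have hc : e i j * (e i i + e j j) = (e i i + e j j) * e i j := by
      rw [mul_add, add_mul, e_mul_ne (Ne.symm hij), e_mul_same, e_mul_same,
        e_mul_ne (Ne.symm hij), zero_add, add_zero]
    have h0 := hzero _ _ hc
    rw [mul_add, trace_add, trace_mul_e, trace_mul_e] at h0
    linear_combination h0
  have B2 : ∀ i j q : Fin (N+1), i ≠ j → q ≠ i → q ≠ j →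
      Δ (e i j) i q = - Δ (e q q) j q := by
    intro i j q hij hqi hqj
    have h1 := S1 i j q
    have h2 := O1 q i j hqi (Ne.symm hqj) (Ne.symm hij)
    linear_combination h1 - h2
  set μ : Fin (N+1) → ℂ := fun i => if i = 0 then 0 else Δ (e i 0) i 0 with hμ
  have cocycle : ∀ i j : Fin (N+1), i ≠ j → i ≠ 0 → j ≠ 0 →
      Δ (e i j) i j + Δ (e j 0) j 0 + Δ (e 0 i) 0 i = 0 := by
    intro i j hij hi hj
    set a : Mat (N+1) := e i j + e j 0 + e 0 i with ha
    have ha2 : a * a = e i 0 + e j i + e 0 j := by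
      rw [ha]
      rw [add_mul, add_mul, mul_add, mul_add, mul_add, mul_add, mul_add, mul_add]
      rw [e_mul_ne (Ne.symm hij), e_mul_same, e_mul_ne hj, e_mul_ne (Ne.symm hi),
        e_mul_ne hj.symm, e_mul_same, e_mul_same, e_mul_ne hij, e_mul_ne (Ne.symm hi).symm]
      simp
    have hc : a * (a * a) = (a * a) * a := (mul_assoc a a a).symm
    have h0 := hzero a (a * a) hc
    rw [ha2, ha] at h0
    rw [hadd, hadd, add_mul, add_mul, mul_add, mul_add, mul_add, mul_add, mul_add, mul_add] at h0
    simp only [trace_add, trace_mul_e] at h0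
    have z1 : Δ (e i j) 0 i = 0 := Z (Ne.symm hi) hij
    have z2 : Δ (e i j) j 0 = 0 := Z (Ne.symm hij) (Ne.symm hj)
    have z3 : Δ (e j 0) 0 i = 0 := Z (Ne.symm hj) hi
    have z4 : Δ (e j 0) i j = 0 := Z hij hj
    have z5 : Δ (e 0 i) i j = 0 := Z hi (Ne.symm hij)
    have z6 : Δ (e 0 i) j 0 = 0 := Z hj (Ne.symm hi)
    linear_combination h0 - z1 - z2 - z3 - z4 - z5 - z6
  have Clam : ∀ i j : Fin (N+1), i ≠ j → Δ (e i j) i j = μ i - μ j := by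
    intro i j hij
    by_cases hj : j = 0
    · subst hj
      simp [hμ, hij]
    · by_cases hi : i = 0
      · subst hi
        have h1 := S1 (0 : Fin (N+1)) j j
        simp only [hμ, if_pos, if_neg hj]
        linear_combination h1
      · have hco := cocycle i j hij hi hj
        have hs1 := S1 (0 : Fin (N+1)) i i
        simp only [hμ, if_neg hi, if_neg hj]
        linear_combination hco - hs1
  set m : Mat (N+1) := Matrix.of (fun p q => if p = q then μ p else Δ (e q q) p q) with hm
  have m_apply : ∀ p q, m p q = if p = q then μ p else Δ (e q q) p q := by
    intro p q; rw [hm]; rfl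
  have unit_rep : ∀ i j, Δ (e i j) = m * e i j - e i j * m := by
    intro i j
    ext p q
    have hA : (m * e i j) p q = if q = j then m p i else 0 := by
      by_cases hq : q = j
      · subst hq
        show (m * Matrix.single i q (1:ℂ)) p q = _
        rw [Matrix.mul_single_apply_same, mul_one, if_pos rfl]
      · show (m * Matrix.single i j (1:ℂ)) p q = _
        rw [Matrix.mul_single_apply_of_ne 1 i j p q hq, if_neg hq]
    have hB : (e i j * m) p q = if p = i then m j q else 0 := by
      by_cases hp : p = i
      · subst hp
        show (Matrix.single p j (1:ℂ) * m) p q = _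
        rw [Matrix.single_mul_apply_same, one_mul, if_pos rfl]
      · show (Matrix.single i j (1:ℂ) * m) p q = _
        rw [Matrix.single_mul_apply_of_ne 1 i j p q hp, if_neg hp]
    rw [Matrix.sub_apply, hA, hB]
    by_cases hq : q = j <;> by_cases hp : p = i
    · -- q = j, p = i
      subst hq; subst hp
      simp only [if_pos rfl, eq_self_iff_true, if_true]
      rw [m_apply, m_apply]
      by_cases hij : p = q
      · subst hij
        simp only [if_pos rfl]
        rw [sub_self]
        exact Z2 p p
      · rw [if_pos rfl, if_pos rfl]
        exact Clam p q hij
    · -- q = j, p ≠ i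
      subst hq
      simp only [if_pos rfl, if_neg hp, eq_self_iff_true, if_true, sub_zero]
      rw [m_apply, if_neg hp]
      by_cases hij : i = q
      · subst hij; rfl
      · by_cases hpj : p = q
        · subst hpj; exact O2 i p hij
        · exact O1 i q p hij hp hpj
    · -- q ≠ j, p = i
      subst hp
      simp only [if_neg hq, if_pos rfl, eq_self_iff_true, if_true, zero_sub]
      rw [m_apply]
      by_cases hjq : j = q
      · exact absurd hjq.symm hq
      · rw [if_neg hjq]
        by_cases hij : p = j
        · subst hij
          exact D1 p q hq
        · by_cases hqi : q = p
          · subst hqi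
            have o3 := O3 q j hij
            have o2 := O2 q j hij
            linear_combination o3 - o2
          · exact B2 p j q hij hqi hq
    · -- q ≠ j, p ≠ i
      simp only [if_neg hq, if_neg hp, sub_zero]
      exact Z hp hq
  have h0Δ : Δ 0 = 0 := by
    have := hhom 0 0
    rwa [zero_smul, zero_smul] at this
  refine ⟨m, ?_⟩
  intro x
  induction x using Matrix.induction_on' with
  | h_zero => simp [h0Δ]
  | h_add p q hp hq => rw [hadd, hp, hq]; noncomm_ring
  | h_std_basis i j c =>
      have hsb : Matrix.single i j c = c • e i j := by
        unfold e; rw [smul_single, smul_eq_mul, mul_one]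
      rw [hsb, hhom, unit_rep i j, smul_sub, mul_smul_comm, smul_mul_assoc]

end Weak2LocalAux

/-- Every symmetric (i.e. `Δ(a*)* = Δ(a)`) weak-2-local derivation on `Mₙ(ℂ)` is a linear
`*`-derivation. -/
theorem symmetric_weak2local_derivation_is_linear_star_derivation
    (Δ : Matrix (Fin n) (Fin n) ℂ → Matrix (Fin n) (Fin n) ℂ)
    (hΔ : IsWeak2LocalDerivation Δ) (hsym : ∀ a, star (Δ (star a)) = Δ a) :
    IsLinearMap ℂ Δ ∧ (∀ x y, Δ (x * y) = Δ x * y + x * Δ y) ∧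
      ∀ a, Δ (star a) = star (Δ a) := by
  classical
  open Weak2LocalAux in
  rcases n with _ | N
  · -- trivial case `n = 0`
    have hsub : ∀ X Y : Matrix (Fin 0) (Fin 0) ℂ, X = Y := by
      intro X Y
      ext i j
      exact i.elim0
    exact ⟨⟨fun x y => hsub _ _, fun c x => hsub _ _⟩, fun x y => hsub _ _, fun a => hsub _ _⟩
  · have hadd' := Weak2LocalAux.hadd hΔ
    have hhom' := Weak2LocalAux.hhom hΔ
    have hzero' := Weak2LocalAux.hzero hΔ
    have hskew' := Weak2LocalAux.hskew hΔ
    obtain ⟨w, hw⟩ := Weak2LocalAux.exists_rep Δ hadd' hhom' hzero' hskew'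
    refine ⟨⟨hadd', fun c x => hhom' c x⟩, ?_, ?_⟩
    · intro x y
      rw [hw, hw, hw]
      noncomm_ring
    · -- the star property
      have hcen : ∀ a, (w + star w) * a = a * (w + star w) := by
        intro a
        have h := hsym a
        rw [hw (star a), hw a, star_sub, StarMul.star_mul, StarMul.star_mul, star_star] at h
        -- h : a * star w - star w * a = w * a - a * w
        have h2 : a * star w + a * w = w * a + star w * a :=
          sub_eq_sub_iff_add_eq_add.mp h
        rw [add_mul, mul_add]
        calc w * a + star w * a = a * star w + a * w := h2.symm
          _ = a * w + a * star w := add_comm _ _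
      intro a
      rw [hw (star a), hw a, star_sub, StarMul.star_mul, StarMul.star_mul]
      have h := hcen (star a)
      rw [add_mul, mul_add] at h
      -- h : w * star a + star w * star a = star a * w + star a * star w
      rw [sub_eq_sub_iff_add_eq_add]
      calc w * star a + star w * star a = star a * w + star a * star w := h
        _ = star a * star w + star a * w := add_comm _ _
end

section
/- Every (not necessarily linear) weak-2-local derivation on M_n(ℂ) is a linear derivation. -/
open Matrix

set_option linter.unusedSectionVars false

namespace W2LDAux

variable {n : ℕ}

abbrev M (n : ℕ) := Matrix (Fin n) (Fin n) ℂ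

/-- matrix units -/
def E (i j : Fin n) : M n := Matrix.single i j 1

lemma E_apply (i j u v : Fin n) : E i j u v = if i = u ∧ j = v then 1 else 0 := rfl

lemma E_mul_E (i j k l : Fin n) : E i j * E k l = if j = k then E i l else 0 := by
  by_cases h : j = k
  · subst h; simp [E, single_mul_single_same]
  · simp only [E, single_mul_single_of_ne _ _ _ _ h, if_neg h]

lemma trace_E_mul (i j : Fin n) (X : M n) : (E i j * X).trace = X j i := by
  simp [Matrix.trace, Matrix.diag, Matrix.mul_apply, E_apply, ite_and, boole_mul,
    Finset.sum_ite_eq, Finset.sum_ite_eq']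

lemma E_mul_diagonal (i j : Fin n) (q : Fin n → ℂ) :
    E i j * diagonal q = q j • E i j := by
  ext u v
  simp only [mul_diagonal, Matrix.smul_apply, E_apply, smul_eq_mul]
  by_cases h : i = u ∧ j = v
  · obtain ⟨h1, h2⟩ := h; subst h1; subst h2; simp
  · simp [h]

lemma diagonal_mul_E (i j : Fin n) (q : Fin n → ℂ) :
    diagonal q * E i j = q i • E i j := by
  ext u v
  simp only [diagonal_mul, Matrix.smul_apply, E_apply, smul_eq_mul]
  by_cases h : i = u ∧ j = v
  · obtain ⟨h1, h2⟩ := h; subst h1; subst h2; simp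
  · simp [h]

lemma sum_E_diag : (∑ k : Fin n, E k k) = (1 : M n) := by
  ext u v
  rw [Matrix.sum_apply]
  simp only [E_apply, Matrix.one_apply]
  by_cases h : u = v
  · subst h
    rw [if_pos rfl, Finset.sum_eq_single u (by intro k _ hk; simp [hk]) (by simp)]
    simp
  · rw [if_neg h, Finset.sum_eq_zero]
    intro k _
    by_cases hk : k = u
    · subst hk; simp [h]
    · simp [hk]

lemma stdBasis_eq_smul_E (i j : Fin n) (c : ℂ) : Matrix.single i j c = c • E i j := by
  rw [E, smul_single, smul_eq_mul, mul_one]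

section Inner

variable [NeZero n]

/-- candidate implementing element for a derivation -/
noncomputable def mD (D : M n →ₗ[ℂ] M n) : M n := ∑ k : Fin n, D (E k 0) * E 0 k

lemma inner_on_units (D : M n →ₗ[ℂ] M n)
    (hD : ∀ x y : M n, D (x * y) = D x * y + x * D y) (i j : Fin n) :
    D (E i j) = mD D * E i j - E i j * mD D := by
  have h1 : mD D * E i j = D (E i 0) * E 0 j := by
    rw [mD, Finset.sum_mul, Finset.sum_eq_single i]
    · rw [mul_assoc, E_mul_E, if_pos rfl]
    · intro k _ hk
      rw [mul_assoc, E_mul_E, if_neg hk, mul_zero]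
    · simp
  have h2 : E i j * mD D = D (E i 0) * E 0 j - D (E i j) := by
    rw [mD, Finset.mul_sum]
    have hterm : ∀ k : Fin n, E i j * (D (E k 0) * E 0 k)
        = D (if j = k then E i 0 else 0) * E 0 k - D (E i j) * E k 0 * E 0 k := by
      intro k
      have := hD (E i j) (E k 0)
      rw [E_mul_E] at this
      rw [← mul_assoc]
      have h3 : E i j * D (E k 0) = D (if j = k then E i 0 else 0) - D (E i j) * E k 0 := by
        rw [eq_sub_iff_add_eq, add_comm, ← this]
      rw [h3, sub_mul]
    rw [Finset.sum_congr rfl (fun k _ => hterm k), Finset.sum_sub_distrib]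
    congr 1
    · rw [Finset.sum_eq_single j]
      · rw [if_pos rfl]
      · intro k _ hk
        rw [if_neg (Ne.symm hk), map_zero, zero_mul]
      · simp
    · have : ∀ k : Fin n, D (E i j) * E k 0 * E 0 k = D (E i j) * E k k := by
        intro k; rw [mul_assoc, E_mul_E, if_pos rfl]
      rw [Finset.sum_congr rfl (fun k _ => this k), ← Finset.mul_sum, sum_E_diag, mul_one]
  rw [h1, h2, sub_sub_cancel]

lemma inner_of_derivation (D : M n →ₗ[ℂ] M n)
    (hD : ∀ x y : M n, D (x * y) = D x * y + x * D y) (x : M n) :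
    D x = mD D * x - x * mD D := by
  conv_lhs => rw [matrix_eq_sum_single x]
  rw [map_sum]
  conv_rhs => rw [matrix_eq_sum_single x]
  rw [Finset.mul_sum, Finset.sum_mul, ← Finset.sum_sub_distrib]
  refine Finset.sum_congr rfl (fun i _ => ?_)
  rw [map_sum, Finset.mul_sum, Finset.sum_mul, ← Finset.sum_sub_distrib]
  refine Finset.sum_congr rfl (fun j _ => ?_)
  rw [stdBasis_eq_smul_E, _root_.map_smul, mul_smul_comm, smul_mul_assoc, ← smul_sub,
    inner_on_units D hD i j]

end Inner

section Heart

variable [NeZero n]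

lemma trace_ad_comm (m t c : M n) (hcomm : t * c = c * t) :
    (t * (m * c - c * m)).trace = 0 := by
  rw [mul_sub, trace_sub, sub_eq_zero, ← mul_assoc,
    trace_mul_comm (t * m) c, ← mul_assoc, ← hcomm, mul_assoc]

lemma heart (Δ : M n → M n)
    (hΔ : ∀ a b : M n, ∀ φ : M n →ₗ[ℂ] ℂ, ∃ D : M n →ₗ[ℂ] M n,
      (∀ x y, D (x * y) = D x * y + x * D y) ∧ φ (Δ a) = φ (D a) ∧ φ (Δ b) = φ (D b))
    (a b t : M n) (lam : ℂ) (hcomm : t * (a - lam • b) = (a - lam • b) * t) :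
    (t * Δ a).trace = lam * (t * Δ b).trace := by
  obtain ⟨D, hD, h1, h2⟩ := hΔ a b ((traceLinearMap (Fin n) ℂ ℂ).comp (LinearMap.mulLeft ℂ t))
  simp only [LinearMap.comp_apply, LinearMap.mulLeft_apply, traceLinearMap_apply] at h1 h2
  rw [h1, h2]
  set m := mD D with hm
  have hda : D a = m * a - a * m := inner_of_derivation D hD a
  have hdb : D b = m * b - b * m := inner_of_derivation D hD b
  have key : (t * (m * (a - lam • b) - (a - lam • b) * m)).trace = 0 :=
    trace_ad_comm m t _ hcomm
  have expand : m * (a - lam • b) - (a - lam • b) * m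
      = (m * a - a * m) - lam • (m * b - b * m) := by
    rw [mul_sub, sub_mul, smul_sub, mul_smul_comm, smul_mul_assoc]
    abel
  rw [expand, mul_sub, trace_sub, mul_smul_comm, trace_smul, smul_eq_mul] at key
  rw [hda, hdb]
  linear_combination key

end Heart

section Key

/-- the fundamental trace-pencil property extracted from weak-2-locality -/
def Heart (f : M n → M n) : Prop :=
  ∀ a b t : M n, ∀ lam : ℂ,
    t * (a - lam • b) = (a - lam • b) * t → (t * f a).trace = lam * (t * f b).trace

variable [NeZero n]

lemma Heart.zero_of_comm {f : M n → M n} (hf : Heart f) {a t : M n}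
    (h : t * a = a * t) : (t * f a).trace = 0 := by
  have h2 := hf a 0 t 0 (by simpa using h)
  simpa using h2

lemma trace_ad_pencil (m t a b : M n) (lam : ℂ)
    (hcomm : t * (a - lam • b) = (a - lam • b) * t) :
    (t * (m * a - a * m)).trace = lam * (t * (m * b - b * m)).trace := by
  have key : (t * (m * (a - lam • b) - (a - lam • b) * m)).trace = 0 :=
    trace_ad_comm m t _ hcomm
  have expand : m * (a - lam • b) - (a - lam • b) * m
      = (m * a - a * m) - lam • (m * b - b * m) := by
    rw [mul_sub, sub_mul, smul_sub, mul_smul_comm, smul_mul_assoc]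
    abel
  rw [expand, mul_sub, trace_sub, mul_smul_comm, trace_smul, smul_eq_mul] at key
  linear_combination key

lemma Heart.sub_ad {f : M n → M n} (hf : Heart f) (m : M n) :
    Heart (fun x => f x - (m * x - x * m)) := by
  intro a b t lam hcomm
  have h1 := hf a b t lam hcomm
  have h3 := trace_ad_pencil m t a b lam hcomm
  show (t * (f a - (m * a - a * m))).trace = lam * (t * (f b - (m * b - b * m))).trace
  simp only [mul_sub, trace_sub] at h3 ⊢
  linear_combination h1 - h3

/-- reference diagonal matrix with distinct diagonal entries -/
def dmat (n : ℕ) : M n := diagonal fun u : Fin n => ((u : ℕ) : ℂ)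

lemma dcast_ne {u v : Fin n} (h : u ≠ v) : ((u : ℕ) : ℂ) ≠ ((v : ℕ) : ℂ) := by
  simp only [ne_eq, Nat.cast_inj]
  exact fun hh => h (Fin.val_injective hh)

lemma E_comm_diagonal {q : Fin n → ℂ} {i j : Fin n} (h : q i = q j) :
    E i j * diagonal q = diagonal q * E i j := by
  rw [E_mul_diagonal, diagonal_mul_E, h]

lemma E_diag_eq (u : Fin n) :
    E u u = diagonal (fun w => if w = u then (1:ℂ) else 0) := by
  ext a b
  by_cases h : a = b
  · subst h
    rw [diagonal_apply_eq, E_apply]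
    by_cases h2 : a = u
    · subst h2; simp
    · simp [h2, Ne.symm h2]
  · rw [diagonal_apply_ne _ h, E_apply, if_neg]
    rintro ⟨rfl, rfl⟩; exact h rfl

lemma diag_pencil (p : Fin n → ℂ) (lam : ℂ) :
    diagonal p - lam • dmat n = diagonal (fun w => p w - lam * ((w : ℕ) : ℂ)) := by
  ext a b
  by_cases h : a = b
  · subst h
    simp [dmat, Matrix.sub_apply, Matrix.smul_apply, diagonal_apply_eq]
  · simp [dmat, Matrix.sub_apply, Matrix.smul_apply, diagonal_apply_ne _ h]

lemma entry_eq_trace (X : M n) (u v : Fin n) : X u v = (E v u * X).trace :=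
  (trace_E_mul v u X).symm

lemma diag_zero {f : M n → M n} (hf : Heart f) (hd : f (dmat n) = 0) (p : Fin n → ℂ) :
    f (diagonal p) = 0 := by
  ext u v
  rw [Matrix.zero_apply, entry_eq_trace (f (diagonal p)) u v]
  by_cases h : u = v
  · subst h
    exact hf.zero_of_comm (E_comm_diagonal rfl)
  · have hne : ((u : ℕ) : ℂ) - ((v : ℕ) : ℂ) ≠ 0 :=
      sub_ne_zero.mpr (dcast_ne h)
    obtain ⟨lam, h2⟩ : ∃ lam : ℂ, lam * (((u : ℕ) : ℂ) - ((v : ℕ) : ℂ)) = p u - p v :=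
      ⟨(p u - p v) / (((u : ℕ) : ℂ) - ((v : ℕ) : ℂ)), div_mul_cancel₀ _ hne⟩
    have hq : p v - lam * ((v : ℕ) : ℂ) = p u - lam * ((u : ℕ) : ℂ) := by
      linear_combination h2
    have hcomm : E v u * (diagonal p - lam • dmat n)
        = (diagonal p - lam • dmat n) * E v u := by
      rw [diag_pencil]
      exact E_comm_diagonal hq
    have := hf (diagonal p) (dmat n) (E v u) lam hcomm
    rw [hd, mul_zero, trace_zero, mul_zero] at this
    exact this

lemma unit_struct {f : M n → M n} (hf : Heart f)
    (hdiag : ∀ p : Fin n → ℂ, f (diagonal p) = 0) {k l : Fin n} (hkl : k ≠ l) :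
    f (E k l) = (f (E k l) k l) • E k l := by
  have h3a : ∀ u v : Fin n, u ≠ k → v ≠ l → f (E k l) u v = 0 := by
    intro u v hu hv
    rw [entry_eq_trace (f (E k l)) u v]
    apply hf.zero_of_comm
    rw [E_mul_E, E_mul_E, if_neg hu, if_neg (fun hh => hv hh.symm)]
  -- the constraint coming from t = E v a + E v b against the diagonal idempotent at l
  have key : ∀ t : M n,
      t * (E k l - (1:ℂ) • diagonal (fun w => if w = l then (1:ℂ) else 0))
        = (E k l - (1:ℂ) • diagonal (fun w => if w = l then (1:ℂ) else 0)) * t →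
      (t * f (E k l)).trace = 0 := by
    intro t ht
    have := hf (E k l) (diagonal (fun w => if w = l then (1:ℂ) else 0)) t 1 ht
    rwa [hdiag, mul_zero, trace_zero, mul_zero] at this
  have keyk : ∀ t : M n,
      t * (E k l - (1:ℂ) • diagonal (fun w => if w = k then (1:ℂ) else 0))
        = (E k l - (1:ℂ) • diagonal (fun w => if w = k then (1:ℂ) else 0)) * t →
      (t * f (E k l)).trace = 0 := by
    intro t ht
    have := hf (E k l) (diagonal (fun w => if w = k then (1:ℂ) else 0)) t 1 ht
    rwa [hdiag, mul_zero, trace_zero, mul_zero] at this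
  have hkk : f (E k l) k k = 0 := by
    have h0 := key (E k k + E k l) (by
      simp [E_mul_E, E_mul_diagonal, diagonal_mul_E, mul_add, add_mul, mul_sub, sub_mul,
        hkl, Ne.symm hkl])
    rw [add_mul, trace_add, trace_E_mul, trace_E_mul] at h0
    have hlk : f (E k l) l k = 0 := h3a l k (Ne.symm hkl) hkl
    rw [hlk] at h0
    simpa using h0
  have hrowne : ∀ v : Fin n, v ≠ l → v ≠ k → f (E k l) k v = 0 := by
    intro v hv hvk
    have h0 := key (E v k + E v l) (by
      simp [E_mul_E, E_mul_diagonal, diagonal_mul_E, mul_add, add_mul, mul_sub, sub_mul,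
        hkl, Ne.symm hkl, hv, Ne.symm hv, hvk, Ne.symm hvk])
    rw [add_mul, trace_add, trace_E_mul, trace_E_mul] at h0
    have hlv : f (E k l) l v = 0 := h3a l v (Ne.symm hkl) hv
    rw [hlv] at h0
    simpa using h0
  have hrow : ∀ v : Fin n, v ≠ l → f (E k l) k v = 0 := by
    intro v hv
    by_cases hvk : v = k
    · subst hvk; exact hkk
    · exact hrowne v hv hvk
  have hcol : ∀ u : Fin n, u ≠ k → u ≠ l → f (E k l) u l = 0 := by
    intro u hu hul
    have h0 := keyk (E l u + E k u) (by
      simp [E_mul_E, E_mul_diagonal, diagonal_mul_E, mul_add, add_mul, mul_sub, sub_mul,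
        hkl, Ne.symm hkl, hu, Ne.symm hu, hul, Ne.symm hul])
    rw [add_mul, trace_add, trace_E_mul, trace_E_mul] at h0
    have huk : f (E k l) u k = 0 := h3a u k hu hkl
    rw [huk] at h0
    simpa using h0
  have hll : f (E k l) l l = 0 := by
    have htr : (f (E k l)).trace = 0 := by
      have h0 := hf.zero_of_comm (a := E k l) (t := (1 : M n)) (by rw [one_mul, mul_one])
      rwa [one_mul] at h0
    have hsum : (f (E k l)).trace = f (E k l) l l := by
      rw [Matrix.trace]
      rw [Finset.sum_eq_single l]
      · rfl
      · intro w _ hw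
        show f (E k l) w w = 0
        by_cases hwk : w = k
        · subst hwk; exact hkk
        · exact h3a w w hwk hw
      · simp
    rw [← hsum, htr]
  ext u v
  rw [Matrix.smul_apply, E_apply]
  by_cases h : k = u ∧ l = v
  · obtain ⟨rfl, rfl⟩ := h
    simp
  · rw [if_neg h, smul_zero]
    by_cases hu : u = k
    · subst hu
      exact hrow v (fun hh => h ⟨rfl, hh.symm⟩)
    · by_cases hv : v = l
      · subst hv
        by_cases hul : u = v
        · subst hul; exact hll
        · exact hcol u hu hul
      · exact h3a u v hu hv

lemma c_antisym {f : M n → M n} (hf : Heart f)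
    (hdiag : ∀ p : Fin n → ℂ, f (diagonal p) = 0) {k l : Fin n} (hkl : k ≠ l) :
    f (E l k) l k = - f (E k l) k l := by
  have hs1 := unit_struct hf hdiag hkl
  have hs2 := unit_struct hf hdiag (Ne.symm hkl)
  have h0 := hf (E k l) (E l k) (E k l - (1:ℂ) • E l k) 1 rfl
  rw [hs1, hs2] at h0
  simp only [one_smul, mul_smul_comm, trace_smul, smul_eq_mul, sub_mul,
    trace_sub, trace_E_mul, E_apply] at h0
  simp only [hkl, Ne.symm hkl, and_self, if_true, if_false, and_false, false_and,
    if_neg (fun hh : k = l => hkl hh)] at h0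
  linear_combination -h0

lemma c_cocycle {f : M n → M n} (hf : Heart f)
    (hdiag : ∀ p : Fin n → ℂ, f (diagonal p) = 0) {i j k : Fin n}
    (hij : i ≠ j) (hjk : j ≠ k) (hik : i ≠ k) :
    f (E i k) i k = f (E i j) i j + f (E j k) j k := by
  have hsij := unit_struct hf hdiag hij
  have hsjk := unit_struct hf hdiag hjk
  have hsik := unit_struct hf hdiag hik
  have hki : f (E k i) = (- f (E i k) i k) • E k i := by
    rw [← c_antisym hf hdiag hik]
    exact unit_struct hf hdiag (Ne.symm hik)
  have hji : f (E j i) = (- f (E i j) i j) • E j i := by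
    rw [← c_antisym hf hdiag hij]
    exact unit_struct hf hdiag (Ne.symm hij)
  have hkj : f (E k j) = (- f (E j k) j k) • E k j := by
    rw [← c_antisym hf hdiag hjk]
    exact unit_struct hf hdiag (Ne.symm hjk)
  -- step 1 : pencil against E i k with lam = 1, 2
  have step1 : ∀ lam : ℂ,
      (f (E i j + E j k)) j i + (f (E i j + E j k)) k j
        - lam * (f (E i j + E j k)) k i = 0 := by
    intro lam
    have h0 := hf (E i j + E j k) (E i k) (E i j + E j k - lam • E i k) lam rfl
    rw [hsik] at h0
    simp only [mul_smul_comm, trace_smul, smul_eq_mul, sub_mul, add_mul,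
      smul_mul_assoc, trace_sub, trace_add, trace_smul, trace_E_mul, E_apply] at h0
    simp only [hij, hjk, hik, Ne.symm hij, Ne.symm hjk, Ne.symm hik,
      and_self, if_true, and_false, false_and, if_false,
      if_neg (fun hh : i = k => hik hh), if_neg (fun hh : k = i => hik hh.symm),
      if_neg (fun hh : i = j => hij hh), if_neg (fun hh : j = i => hij hh.symm),
      if_neg (fun hh : j = k => hjk hh), if_neg (fun hh : k = j => hjk hh.symm)] at h0
    linear_combination h0
  have hYki : (f (E i j + E j k)) k i = 0 := by
    have e1 := step1 1
    have e2 := step1 2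
    linear_combination e1 - e2
  have hS : (f (E i j + E j k)) j i + (f (E i j + E j k)) k j = 0 := by
    have e1 := step1 1
    linear_combination e1 + hYki
  -- step 2 : the cyclic witness
  have hWform : E i j + E j k - (-1 : ℂ) • E k i = E i j + E j k + E k i := by
    rw [neg_smul, one_smul, sub_neg_eq_add]
  have hW2 : (E i j + E j k + E k i) * (E i j + E j k + E k i)
      = E i k + E j i + E k j := by
    simp only [mul_add, add_mul, E_mul_E]
    simp only [hij, hjk, hik, Ne.symm hij, Ne.symm hjk, Ne.symm hik,
      if_pos rfl, if_neg (fun hh : j = i => hij hh.symm),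
      if_neg (fun hh : k = j => hjk hh.symm), if_neg (fun hh : i = k => hik hh),
      if_neg (fun hh : k = i => hik hh.symm), if_neg (fun hh : i = j => hij hh),
      if_neg (fun hh : j = k => hjk hh)]
    simp only [↓reduceIte]
    abel
  have hcomm : ((E i j + E j k + E k i) * (E i j + E j k + E k i))
      * (E i j + E j k - (-1 : ℂ) • E k i)
      = (E i j + E j k - (-1 : ℂ) • E k i)
      * ((E i j + E j k + E k i) * (E i j + E j k + E k i)) := by
    rw [hWform]
    exact (mul_assoc _ _ _)
  have h3 := hf (E i j + E j k) (E k i)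
    ((E i j + E j k + E k i) * (E i j + E j k + E k i)) (-1) hcomm
  rw [hW2, hki] at h3
  simp only [mul_smul_comm, trace_smul, smul_eq_mul, add_mul,
    trace_add, trace_E_mul, E_apply] at h3
  simp only [hij, hjk, hik, Ne.symm hij, Ne.symm hjk, Ne.symm hik,
    and_self, if_true, and_false, false_and, if_false,
    if_neg (fun hh : i = k => hik hh), if_neg (fun hh : k = i => hik hh.symm),
    if_neg (fun hh : i = j => hij hh), if_neg (fun hh : j = i => hij hh.symm),
    if_neg (fun hh : j = k => hjk hh), if_neg (fun hh : k = j => hjk hh.symm)] at h3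
  -- h3 : Y k i + (Y i j + Y j k) = cik   (after simplification of the RHS)
  -- step 3 : identify Y i j
  have h4 := hf (E i j + E j k) (E j i) (E i j + E j k - (1:ℂ) • E j i) 1 rfl
  rw [hji] at h4
  simp only [one_smul, mul_smul_comm, trace_smul, smul_eq_mul, sub_mul, add_mul,
    trace_sub, trace_add, trace_E_mul, E_apply] at h4
  simp only [hij, hjk, hik, Ne.symm hij, Ne.symm hjk, Ne.symm hik,
    and_self, if_true, and_false, false_and, if_false,
    if_neg (fun hh : i = k => hik hh), if_neg (fun hh : k = i => hik hh.symm),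
    if_neg (fun hh : i = j => hij hh), if_neg (fun hh : j = i => hij hh.symm),
    if_neg (fun hh : j = k => hjk hh), if_neg (fun hh : k = j => hjk hh.symm)] at h4
  -- step 4 : identify Y j k
  have h5 := hf (E i j + E j k) (E k j) (E i j + E j k - (1:ℂ) • E k j) 1 rfl
  rw [hkj] at h5
  simp only [one_smul, mul_smul_comm, trace_smul, smul_eq_mul, sub_mul, add_mul,
    trace_sub, trace_add, trace_E_mul, E_apply] at h5
  simp only [hij, hjk, hik, Ne.symm hij, Ne.symm hjk, Ne.symm hik,
    and_self, if_true, and_false, false_and, if_false,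
    if_neg (fun hh : i = k => hik hh), if_neg (fun hh : k = i => hik hh.symm),
    if_neg (fun hh : i = j => hij hh), if_neg (fun hh : j = i => hij hh.symm),
    if_neg (fun hh : j = k => hjk hh), if_neg (fun hh : k = j => hjk hh.symm)] at h5
  linear_combination -h3 - h4 - h5 + hYki + 2 * hS

lemma exists_ad {f : M n → M n} (hf : Heart f) :
    ∃ m : M n, ∀ x, f x = m * x - x * m := by
  classical
  -- first normalization : kill f at the reference diagonal
  have hfd_diag : ∀ u : Fin n, f (dmat n) u u = 0 := by
    intro u
    rw [entry_eq_trace (f (dmat n)) u u]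
    exact hf.zero_of_comm (E_comm_diagonal rfl)
  set m₀ : M n := Matrix.of (fun u v : Fin n =>
    if u = v then 0 else f (dmat n) u v / (((v : ℕ) : ℂ) - ((u : ℕ) : ℂ))) with hm₀def
  have hm₀ : m₀ * dmat n - dmat n * m₀ = f (dmat n) := by
    ext u v
    have hL : (m₀ * dmat n) u v = m₀ u v * ((v : ℕ) : ℂ) := by
      rw [dmat, mul_diagonal]
    have hR : (dmat n * m₀) u v = ((u : ℕ) : ℂ) * m₀ u v := by
      rw [dmat, diagonal_mul]
    rw [Matrix.sub_apply, hL, hR]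
    by_cases h : u = v
    · subst h
      simp only [hm₀def, Matrix.of_apply, if_pos rfl]
      rw [hfd_diag u]
      ring
    · simp only [hm₀def, Matrix.of_apply, if_neg h]
      have hne : ((v : ℕ) : ℂ) - ((u : ℕ) : ℂ) ≠ 0 :=
        sub_ne_zero.mpr (dcast_ne (Ne.symm h))
      field_simp
  set f₁ : M n → M n := fun x => f x - (m₀ * x - x * m₀) with hf₁def
  have hf₁ : Heart f₁ := hf.sub_ad m₀
  have hf₁d : f₁ (dmat n) = 0 := by
    simp only [hf₁def, hm₀]
    exact sub_self _
  have hdiag₁ : ∀ p : Fin n → ℂ, f₁ (diagonal p) = 0 := diag_zero hf₁ hf₁d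
  -- second normalization : kill f₁ at the matrix units
  set mu : Fin n → ℂ := fun u => if u = 0 then 0 else f₁ (E u 0) u 0 with hmu
  set m₁ : M n := diagonal mu with hm₁def
  set f₂ : M n → M n := fun x => f₁ x - (m₁ * x - x * m₁) with hf₂def
  have hf₂ : Heart f₂ := hf₁.sub_ad m₁
  have hdiag₂ : ∀ p : Fin n → ℂ, f₂ (diagonal p) = 0 := by
    intro p
    show f₁ (diagonal p) - (m₁ * diagonal p - diagonal p * m₁) = 0
    rw [hdiag₁ p, hm₁def, diagonal_mul_diagonal, diagonal_mul_diagonal,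
      zero_sub, neg_eq_zero, sub_eq_zero]
    exact congrArg diagonal (funext fun i => mul_comm _ _)
  have hunit₂ : ∀ k l : Fin n, k ≠ l → f₂ (E k l) = 0 := by
    intro k l hkl
    have hstr := unit_struct hf₁ hdiag₁ hkl
    have hml : m₁ * E k l - E k l * m₁ = (mu k - mu l) • E k l := by
      rw [hm₁def, diagonal_mul_E, E_mul_diagonal, sub_smul]
    show f₁ (E k l) - (m₁ * E k l - E k l * m₁) = 0
    rw [hml, hstr, ← sub_smul]
    have hscal : f₁ (E k l) k l - (mu k - mu l) = 0 := by
      by_cases hk : k = 0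
      · subst hk
        have hl : ¬(l = 0) := fun hh => hkl hh.symm
        have ha := c_antisym hf₁ hdiag₁ hkl
        simp only [hmu, if_pos rfl, if_neg hl]
        linear_combination ha
      · by_cases hl : l = 0
        · subst hl
          simp only [hmu, if_neg hk, if_pos rfl]
          ring
        · have hk0 : k ≠ (0 : Fin n) := hk
          have h0l : (0 : Fin n) ≠ l := fun hh => hl hh.symm
          have hco := c_cocycle hf₁ hdiag₁ hk0 h0l hkl
          have ha := c_antisym hf₁ hdiag₁ h0l
          simp only [hmu, if_neg hk, if_neg hl]
          linear_combination hco + ha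
    rw [hscal, zero_smul]
  -- all of f₂ vanishes
  have hpick : ∀ x b : M n, f₂ b = 0 → (b * f₂ x).trace = 0 := by
    intro x b hb
    have e1 := hf₂ x b (x - (1:ℂ) • b) 1 rfl
    have e2 := hf₂ x b (x - (2:ℂ) • b) 2 rfl
    rw [hb, mul_zero, trace_zero, mul_zero] at e1 e2
    simp only [sub_mul, smul_mul_assoc, trace_sub, trace_smul, smul_eq_mul] at e1 e2
    linear_combination e1 - e2
  have hzero : ∀ x, f₂ x = 0 := by
    intro x
    ext u v
    rw [Matrix.zero_apply, entry_eq_trace (f₂ x) u v]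
    by_cases h : v = u
    · subst h
      refine hpick x (E v v) ?_
      rw [E_diag_eq]
      exact hdiag₂ _
    · exact hpick x (E v u) (hunit₂ v u h)
  refine ⟨m₀ + m₁, fun x => ?_⟩
  have h := hzero x
  show f x = (m₀ + m₁) * x - x * (m₀ + m₁)
  have h2 : f x - (m₀ * x - x * m₀) - (m₁ * x - x * m₁) = 0 := h
  rw [sub_sub, sub_eq_zero] at h2
  rw [h2, add_mul, mul_add]
  abel

end Key

end W2LDAux

variable {n : ℕ}

/-- Every (non-necessarily linear) weak-2-local derivation on `Mₙ(ℂ)` is a linear derivation. -/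
theorem weak2local_derivation_is_linear_derivation
    (Δ : Matrix (Fin n) (Fin n) ℂ → Matrix (Fin n) (Fin n) ℂ)
    (hΔ : IsWeak2LocalDerivation Δ) :
    IsLinearMap ℂ Δ ∧ ∀ x y, Δ (x * y) = Δ x * y + x * Δ y := by
  classical
  rcases Nat.eq_zero_or_pos n with hn | hn
  · subst hn
    have hsub : ∀ A B : Matrix (Fin 0) (Fin 0) ℂ, A = B := by
      intro A B; ext i j; exact i.elim0
    exact ⟨⟨fun x y => hsub _ _, fun c x => hsub _ _⟩, fun x y => hsub _ _⟩
  · haveI : NeZero n := ⟨hn.ne'⟩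
    have hheart : W2LDAux.Heart Δ := by
      intro a b t lam hcomm
      exact W2LDAux.heart Δ hΔ a b t lam hcomm
    obtain ⟨m, hm⟩ := W2LDAux.exists_ad hheart
    refine ⟨⟨fun x y => ?_, fun c x => ?_⟩, fun x y => ?_⟩
    · rw [hm, hm, hm, add_mul, mul_add]
      abel
    · rw [hm, hm]
      rw [mul_smul_comm, smul_mul_assoc, smul_sub]
    · rw [hm, hm, hm]
      noncomm_ring
end
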